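/- Let $F$ be a hyperbolic hyperfield and $\varphi: F \to L$ a morphism of hyperfields. Then $\varphi$ induces a morphism of graded rings $\varphi_* = \{\varphi_n\}: K_* F \to K_* L$ with $\varphi_0 = \mathrm{id}_{\mathbb{Z}}$ and $\varphi_n(\rho(a_1)\cdots\rho(a_n)) = \rho(\varphi(a_1))\cdots\rho(\varphi(a_n))$ on generators; moreover $(\psi \circ \varphi)_* = \psi_* \circ \varphi_*$, $(\mathrm{id})_* = \mathrm{id}$, and if $\varphi$ is surjective then so is each $\varphi_n$. -/

import Mathlib

namespace IgrPaper

/-- Data of a multiring: a multivalued addition, a multiplication, a negation,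
a zero and a one. -/
structure MulringData (α : Type*) where
  add : α → α → Set α
  mul : α → α → α
  neg : α → α
  zero : α
  one : α

namespace MulringData

variable {α β γ : Type*}

/-- Product of two subsets under the multiplication of `R`. -/
def mulSet (R : MulringData α) (A B : Set α) : Set α :=
  {z | ∃ x ∈ A, ∃ y ∈ B, z = R.mul x y}

/-- `R` is a (commutative) multiring on the subset `S`. -/
structure IsMultiringOn (R : MulringData α) (S : Set α) : Prop where
  zero_mem : R.zero ∈ S
  one_mem : R.one ∈ S
  neg_mem : ∀ a ∈ S, R.neg a ∈ S
  add_sub : ∀ a ∈ S, ∀ b ∈ S, R.add a b ⊆ S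
  mul_mem : ∀ a ∈ S, ∀ b ∈ S, R.mul a b ∈ S
  add_nonempty : ∀ a ∈ S, ∀ b ∈ S, (R.add a b).Nonempty
  add_comm : ∀ a ∈ S, ∀ b ∈ S, R.add a b = R.add b a
  zero_add : ∀ a ∈ S, ∀ b ∈ S, (a ∈ R.add R.zero b ↔ a = b)
  reverse : ∀ a ∈ S, ∀ b ∈ S, ∀ c ∈ S, c ∈ R.add a b → a ∈ R.add c (R.neg b)
  add_assoc : ∀ a ∈ S, ∀ b ∈ S, ∀ c ∈ S,
    (⋃ x ∈ R.add a b, R.add x c) = ⋃ y ∈ R.add b c, R.add a y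
  mul_comm : ∀ a ∈ S, ∀ b ∈ S, R.mul a b = R.mul b a
  mul_assoc : ∀ a ∈ S, ∀ b ∈ S, ∀ c ∈ S, R.mul (R.mul a b) c = R.mul a (R.mul b c)
  one_mul : ∀ a ∈ S, R.mul R.one a = a
  mul_zero : ∀ a ∈ S, R.mul a R.zero = R.zero
  distrib : ∀ a ∈ S, ∀ b ∈ S, ∀ c ∈ S, ∀ d ∈ S,
    c ∈ R.add a b → R.mul c d ∈ R.add (R.mul a d) (R.mul b d)

/-- `R` is a hyperfield on the subset `S`. -/
structure IsHyperfieldOn (R : MulringData α) (S : Set α)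
    extends IsMultiringOn R S : Prop where
  one_ne_zero : R.one ≠ R.zero
  exists_inv : ∀ a ∈ S, a ≠ R.zero → ∃ b ∈ S, R.mul a b = R.one
  distrib_eq : ∀ a ∈ S, ∀ b ∈ S, ∀ d ∈ S,
    (fun x => R.mul x d) '' (R.add a b) = R.add (R.mul a d) (R.mul b d)

abbrev IsMultiring (R : MulringData α) : Prop := R.IsMultiringOn Set.univ
abbrev IsHyperfield (R : MulringData α) : Prop := R.IsHyperfieldOn Set.univ

/-- Hyperbolic on `S`: `1 - 1` is everything. -/
def IsHyperbolicOn (R : MulringData α) (S : Set α) : Prop :=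
  R.add R.one (R.neg R.one) = S

abbrev IsHyperbolic (R : MulringData α) : Prop := R.IsHyperbolicOn Set.univ

/-- Pre-special hyperfield: hyperbolic hyperfield with `a² = 1` for nonzero `a`
and `(1-a)(1-a) ⊆ 1-a`. -/
def IsPreSpecialHF (R : MulringData α) : Prop :=
  R.IsHyperfield ∧ R.IsHyperbolic ∧ (∀ a, a ≠ R.zero → R.mul a a = R.one) ∧
    ∀ a, R.mulSet (R.add R.one (R.neg a)) (R.add R.one (R.neg a)) ⊆ R.add R.one (R.neg a)

/-- Morphism of multirings/hyperfields, relative to subsets. -/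
structure IsHFMorphismOn (R : MulringData α) (S : Set α) (Q : MulringData β) (T : Set β)
    (f : α → β) : Prop where
  maps_to : ∀ a ∈ S, f a ∈ T
  map_zero : f R.zero = Q.zero
  map_one : f R.one = Q.one
  map_neg : ∀ a ∈ S, f (R.neg a) = Q.neg (f a)
  map_mul : ∀ a ∈ S, ∀ b ∈ S, f (R.mul a b) = Q.mul (f a) (f b)
  map_add : ∀ a ∈ S, ∀ b ∈ S, ∀ c ∈ S, c ∈ R.add a b → f c ∈ Q.add (f a) (f b)

abbrev IsHFMorphism (R : MulringData α) (Q : MulringData β) (f : α → β) : Prop :=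
  IsHFMorphismOn R Set.univ Q Set.univ f

end MulringData
end IgrPaper
namespace IgrPaper
open MulringData

variable {α : Type*}

/-- The free ring on the nonzero elements of `R`, over `ℤ`. -/
abbrev KFree (R : MulringData α) : Type _ := FreeAlgebra ℤ {a : α // a ≠ R.zero}

/-- Defining relations of the K-theory ring of a hyperfield:
logarithm additivity and the Steinberg-type relation `ρ(a)ρ(b) = 0` for `b ∈ 1 - a`. -/
inductive KRel (R : MulringData α) : KFree R → KFree R → Prop
  | log (a b : {a : α // a ≠ R.zero}) (hab : R.mul a.1 b.1 ≠ R.zero) :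
      KRel R (FreeAlgebra.ι ℤ (⟨R.mul a.1 b.1, hab⟩ : {a : α // a ≠ R.zero}))
        (FreeAlgebra.ι ℤ a + FreeAlgebra.ι ℤ b)
  | steinberg (a b : {a : α // a ≠ R.zero}) (h : (b : α) ∈ R.add R.one (R.neg a.1)) :
      KRel R (FreeAlgebra.ι ℤ a * FreeAlgebra.ι ℤ b) 0

/-- The total K-theory ring `K_*F` of a hyperfield. -/
abbrev KT (R : MulringData α) : Type _ := RingQuot (KRel R)

open Classical in
/-- The generator `ρ(a) ∈ K_1 F` (with junk value `0` for `a = 0`). -/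
noncomputable def kgen (R : MulringData α) (a : α) : KT R :=
  if h : a = R.zero then 0
  else RingQuot.mkRingHom (KRel R) (FreeAlgebra.ι ℤ (⟨a, h⟩ : {a : α // a ≠ R.zero}))

/-- The `n`-th graded piece `K_n F`: the additive subgroup generated by products
of `n` generators. -/
noncomputable def Kpiece (R : MulringData α) (n : ℕ) : AddSubgroup (KT R) :=
  AddSubgroup.closure
    {x | ∃ l : List {a : α // a ≠ R.zero}, l.length = n ∧ x = (l.map fun a => kgen R a.1).prod}

/-- Defining relations of the reduced (mod 2) K-theory ring `k_*F`. -/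
inductive kRel (R : MulringData α) : KFree R → KFree R → Prop
  | base (x y : KFree R) : KRel R x y → kRel R x y
  | two (x : KFree R) : kRel R (x + x) 0

/-- The reduced K-theory ring `k_*F = K_*F / 2K_*F`. -/
abbrev kT (R : MulringData α) : Type _ := RingQuot (kRel R)

open Classical in
/-- The generator `ρ(a) ∈ k_1 F` (with junk value `0` for `a = 0`). -/
noncomputable def kgenr (R : MulringData α) (a : α) : kT R :=
  if h : a = R.zero then 0
  else RingQuot.mkRingHom (kRel R) (FreeAlgebra.ι ℤ (⟨a, h⟩ : {a : α // a ≠ R.zero}))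

/-- The `n`-th graded piece `k_n F`. -/
noncomputable def kpiece (R : MulringData α) (n : ℕ) : AddSubgroup (kT R) :=
  AddSubgroup.closure
    {x | ∃ l : List {a : α // a ≠ R.zero}, l.length = n ∧ x = (l.map fun a => kgenr R a.1).prod}

end IgrPaper

namespace IgrPaper
open MulringData


section Aux
variable {α β : Type*}

lemma kgen_mk (R : MulringData α) (a : {a : α // a ≠ R.zero}) :
    kgen R a.1 = RingQuot.mkRingHom (KRel R) (FreeAlgebra.ι ℤ a) := by
  rw [kgen, dif_neg a.2]

lemma kgen_zero (R : MulringData α) : kgen R R.zero = 0 := by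
  rw [kgen, dif_pos rfl]

/-- A hyperfield morphism preserves nonzeroness. -/
lemma hf_map_ne_zero (R : MulringData α) (S : MulringData β)
    (hR : R.IsHyperfield) (hS : S.IsHyperfield) (φ : α → β) (hφ : IsHFMorphism R S φ)
    {a : α} (ha : a ≠ R.zero) : φ a ≠ S.zero := by
  obtain ⟨b, -, hb⟩ := hR.exists_inv a trivial ha
  intro h0
  have h1 : φ (R.mul a b) = S.mul (φ a) (φ b) := hφ.map_mul a trivial b trivial
  rw [hb, hφ.map_one, h0] at h1
  have : S.mul (φ b) S.zero = S.zero := hS.mul_zero (φ b) trivial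
  rw [hS.mul_comm S.zero trivial (φ b) trivial] at h1
  exact hS.one_ne_zero (h1.trans this)

/-- Extensionality: a ring hom out of `KT R` is determined by its values on generators. -/
lemma KT_hom_ext (R : MulringData α) {T : Type*} [Ring T] (f g : KT R →+* T)
    (h : ∀ a : α, f (kgen R a) = g (kgen R a)) : f = g := by
  apply RingQuot.ringQuot_ext
  have := FreeAlgebra.hom_ext (R := ℤ) (X := {a : α // a ≠ R.zero})
    (f := (f.comp (RingQuot.mkRingHom (KRel R))).toIntAlgHom)
    (g := (g.comp (RingQuot.mkRingHom (KRel R))).toIntAlgHom) ?_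
  · ext x
    exact DFunLike.congr_fun this x
  · funext a
    have ha := h a.1
    rw [kgen_mk R a] at ha
    exact ha

/-- Existence of the induced map. -/
lemma KT_lift_exists (R : MulringData α) (S : MulringData β)
    (hR : R.IsHyperfield) (hS : S.IsHyperfield)
    (φ : α → β) (hφ : IsHFMorphism R S φ) :
    ∃ Φ : KT R →+* KT S, ∀ a : α, Φ (kgen R a) = kgen S (φ a) := by
  set f0 : KFree R →ₐ[ℤ] KT S :=
    FreeAlgebra.lift ℤ (fun a : {a : α // a ≠ R.zero} => kgen S (φ a.1)) with hf0
  have hrel : ∀ ⦃x y : KFree R⦄, KRel R x y → f0.toRingHom x = f0.toRingHom y := by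
    intro x y hxy
    induction hxy with
    | log a b hab =>
      have hm : φ (R.mul a.1 b.1) = S.mul (φ a.1) (φ b.1) := hφ.map_mul a.1 trivial b.1 trivial
      have ha : φ a.1 ≠ S.zero := hf_map_ne_zero R S hR hS φ hφ a.2
      have hb : φ b.1 ≠ S.zero := hf_map_ne_zero R S hR hS φ hφ b.2
      have hab' : S.mul (φ a.1) (φ b.1) ≠ S.zero := by
        rw [← hm]; exact hf_map_ne_zero R S hR hS φ hφ hab
      have key := RingQuot.mkRingHom_rel (KRel.log (R := S) ⟨φ a.1, ha⟩ ⟨φ b.1, hb⟩ hab')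
      simp only [map_add] at key
      simp only [AlgHom.toRingHom_eq_coe, RingHom.coe_coe, map_add, hf0,
        FreeAlgebra.lift_ι_apply]
      rw [hm, kgen_mk S ⟨S.mul (φ a.1) (φ b.1), hab'⟩, kgen_mk S ⟨φ a.1, ha⟩,
        kgen_mk S ⟨φ b.1, hb⟩]
      exact key
    | steinberg a b h =>
      have ha : φ a.1 ≠ S.zero := hf_map_ne_zero R S hR hS φ hφ a.2
      have hb : φ b.1 ≠ S.zero := hf_map_ne_zero R S hR hS φ hφ b.2
      have hmem : φ b.1 ∈ S.add S.one (S.neg (φ a.1)) := by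
        have := hφ.map_add R.one trivial (R.neg a.1) trivial b.1 trivial h
        rwa [hφ.map_one, hφ.map_neg a.1 trivial] at this
      have key := RingQuot.mkRingHom_rel (KRel.steinberg (R := S) ⟨φ a.1, ha⟩ ⟨φ b.1, hb⟩ hmem)
      simp only [map_mul, map_zero] at key
      simp only [AlgHom.toRingHom_eq_coe, RingHom.coe_coe, map_mul, map_zero, hf0,
        FreeAlgebra.lift_ι_apply]
      rw [kgen_mk S ⟨φ a.1, ha⟩, kgen_mk S ⟨φ b.1, hb⟩]
      exact key
  refine ⟨RingQuot.lift ⟨f0.toRingHom, hrel⟩, fun a => ?_⟩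
  by_cases h : a = R.zero
  · subst h
    rw [kgen_zero, map_zero, hφ.map_zero, kgen_zero]
  · rw [kgen_mk R ⟨a, h⟩, RingQuot.lift_mkRingHom_apply]
    simp [hf0, FreeAlgebra.lift_ι_apply]

end Aux

/-- Functoriality of K-theory: a morphism of hyperbolic hyperfields `φ : F → L`
induces a unique (graded) ring homomorphism `φ_* : K_*F → K_*L` sending
`ρ(a) ↦ ρ(φ a)`; it preserves the grading, is compatible with composition and
identities, and is surjective whenever `φ` is surjective. -/
theorem stmt16 {α β : Type*} (R : MulringData α) (S : MulringData β)
    (hR : R.IsHyperfield) (hRhyp : R.IsHyperbolic) (hS : S.IsHyperfield)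
    (φ : α → β) (hφ : IsHFMorphism R S φ) :
    (∃! Φ : KT R →+* KT S, ∀ a : α, Φ (kgen R a) = kgen S (φ a)) ∧
    (∀ Φ : KT R →+* KT S, (∀ a : α, Φ (kgen R a) = kgen S (φ a)) →
      (∀ n, Set.MapsTo Φ (Kpiece R n) (Kpiece S n)) ∧
      (Function.Surjective φ → Function.Surjective Φ)) ∧
    (∀ Φ : KT R →+* KT R, (∀ a : α, Φ (kgen R a) = kgen R a) → Φ = RingHom.id _) ∧
    (∀ (γ : Type*) (Q : MulringData γ) (_hQ : Q.IsHyperfield) (ψ : β → γ),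
      IsHFMorphism S Q ψ →
      ∀ (Φ : KT R →+* KT S) (Ψ : KT S →+* KT Q),
        (∀ a : α, Φ (kgen R a) = kgen S (φ a)) →
        (∀ b : β, Ψ (kgen S b) = kgen Q (ψ b)) →
        ∀ a : α, Ψ (Φ (kgen R a)) = kgen Q (ψ (φ a))) := by
  refine ⟨?_, ?_, ?_, ?_⟩
  · obtain ⟨Φ, hΦ⟩ := KT_lift_exists R S hR hS φ hφ
    exact ⟨Φ, hΦ, fun Ψ hΨ => KT_hom_ext R Ψ Φ (fun a => (hΨ a).trans (hΦ a).symm)⟩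
  · intro Φ hΦ
    constructor
    · intro n x hx
      induction hx using AddSubgroup.closure_induction with
      | mem x hx =>
        obtain ⟨l, hl, rfl⟩ := hx
        have hΦx : Φ (l.map fun a => kgen R a.1).prod
            = (l.map fun a => kgen S (φ a.1)).prod := by
          rw [map_list_prod, List.map_map]
          congr 1
          exact List.map_congr_left (fun a _ => hΦ a.1)
        show Φ _ ∈ Kpiece S n
        rw [hΦx]
        apply AddSubgroup.subset_closure
        refine ⟨l.map fun a => ⟨φ a.1, hf_map_ne_zero R S hR hS φ hφ a.2⟩, by simp [hl], ?_⟩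
        rw [List.map_map]
        rfl
      | zero => simpa using (Kpiece S n).zero_mem
      | add x y _ _ hx hy => simpa using (Kpiece S n).add_mem hx hy
      | neg x _ hx => simpa using (Kpiece S n).neg_mem hx
    · intro hsurj y
      obtain ⟨x, rfl⟩ := RingQuot.mkRingHom_surjective (KRel S) y
      induction x using FreeAlgebra.induction with
      | grade0 r =>
        refine ⟨(r : KT R), ?_⟩
        rw [map_intCast]
        simp [algebraMap_int_eq, map_intCast]
      | grade1 x =>
        obtain ⟨a, ha⟩ := hsurj x.1
        refine ⟨kgen R a, ?_⟩
        rw [hΦ a, ha, kgen_mk S ⟨x.1, x.2⟩]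
      | mul a b ha hb =>
        obtain ⟨za, hza⟩ := ha
        obtain ⟨zb, hzb⟩ := hb
        exact ⟨za * zb, by rw [map_mul, map_mul, hza, hzb]⟩
      | add a b ha hb =>
        obtain ⟨za, hza⟩ := ha
        obtain ⟨zb, hzb⟩ := hb
        exact ⟨za + zb, by rw [map_add, map_add, hza, hzb]⟩
  · intro Φ hΦ
    exact KT_hom_ext R Φ (RingHom.id _) (fun a => by simpa using hΦ a)
  · intro γ Q _hQ ψ hψ Φ Ψ hΦ hΨ a
    rw [hΦ a, hΨ (φ a)]

end IgrPaper
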